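/- The Ramanujan identity: for t > 0, ν(t) = e^t − N(t), where ν(t) = ∫₀^∞ t^u / Γ(u+1) du and N(t) = ∫₀^∞ e^(-rt) / ( r ((log r)² + π²) ) dr. -/

import Mathlib

open MeasureTheory Set Real Filter

noncomputable def nuF (t : ℝ) : ℝ := ∫ u in Ioi (0:ℝ), t ^ u / Real.Gamma (u + 1)

noncomputable def NNF (t : ℝ) : ℝ := ∫ x : ℝ, Real.exp (-(t * Real.exp x)) / (x ^ 2 + π ^ 2)

lemma gamma_ge_exp_neg_one {s : ℝ} (hs : 1 ≤ s) : Real.exp (-1) ≤ Real.Gamma s := by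
  have h0 : (0:ℝ) < s := lt_of_lt_of_le one_pos hs
  rw [Real.Gamma_eq_integral h0]
  have hint : IntegrableOn (fun x : ℝ => Real.exp (-x) * x ^ (s - 1)) (Ioi 0) :=
    Real.GammaIntegral_convergent h0
  have hexp : IntegrableOn (fun x : ℝ => Real.exp (-x)) (Ioi 1) := by
    simpa using exp_neg_integrableOn_Ioi 1 one_pos
  have step1 : ∫ x in Ioi (1:ℝ), Real.exp (-x) ≤ ∫ x in Ioi (1:ℝ), Real.exp (-x) * x ^ (s - 1) := by
    apply setIntegral_mono_on hexp (hint.mono_set (Ioi_subset_Ioi one_pos.le)) measurableSet_Ioi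
    intro x hx
    have hx1 : (1:ℝ) ≤ x := le_of_lt hx
    nth_rewrite 1 [← mul_one (Real.exp (-x))]
    exact mul_le_mul_of_nonneg_left (Real.one_le_rpow hx1 (by linarith)) (Real.exp_pos _).le
  have step2 : ∫ x in Ioi (1:ℝ), Real.exp (-x) * x ^ (s - 1)
      ≤ ∫ x in Ioi (0:ℝ), Real.exp (-x) * x ^ (s - 1) := by
    apply setIntegral_mono_set hint
    · filter_upwards [self_mem_ae_restrict (measurableSet_Ioi : MeasurableSet (Ioi (0:ℝ)))]
        with x hx
      exact mul_nonneg (Real.exp_pos _).le (Real.rpow_nonneg (le_of_lt hx) _)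
    · exact HasSubset.Subset.eventuallyLE (Ioi_subset_Ioi one_pos.le)
  calc Real.exp (-1) = ∫ x in Ioi (1:ℝ), Real.exp (-x) := (integral_exp_neg_Ioi 1).symm
    _ ≤ _ := step1.trans step2

lemma gamma_floor_le {u : ℝ} (hu : 1 ≤ u) :
    (Nat.factorial (Nat.floor u) : ℝ) ≤ Real.Gamma (u + 1) := by
  have h2 : (2:ℝ) ≤ (Nat.floor u : ℝ) + 1 := by
    have h1 : 1 ≤ Nat.floor u := by
      rw [Nat.one_le_floor_iff]; exact hu
    have : (1:ℝ) ≤ (Nat.floor u : ℝ) := by exact_mod_cast h1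
    linarith
  have hle : (Nat.floor u : ℝ) + 1 ≤ u + 1 := by
    have := Nat.floor_le (by linarith : (0:ℝ) ≤ u)
    linarith
  calc (Nat.factorial (Nat.floor u) : ℝ) = Real.Gamma ((Nat.floor u : ℝ) + 1) :=
        (Real.Gamma_nat_eq_factorial _).symm
    _ ≤ Real.Gamma (u + 1) := by
        rcases eq_or_lt_of_le hle with h | h
        · rw [h]
        · exact le_of_lt (Real.Gamma_strictMonoOn_Ici h2 (le_trans h2 hle) h)

lemma tendsto_rpow_div_Gamma {c : ℝ} (hc : 0 < c) :
    Tendsto (fun u : ℝ => c ^ u / Real.Gamma (u + 1)) atTop (nhds 0) := by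
  set d : ℝ := max c 1 with hd
  have hd1 : (1:ℝ) ≤ d := le_max_right _ _
  have hd0 : (0:ℝ) ≤ d := by linarith
  have hg : Tendsto (fun n : ℕ => d * (d ^ n / (Nat.factorial n : ℝ))) atTop (nhds 0) := by
    simpa using (FloorSemiring.tendsto_pow_div_factorial_atTop d).const_mul d
  have hcomp : Tendsto (fun u : ℝ => d * (d ^ (Nat.floor u) / (Nat.factorial (Nat.floor u) : ℝ)))
      atTop (nhds 0) := hg.comp tendsto_nat_floor_atTop
  apply squeeze_zero' (g := fun u : ℝ => d * (d ^ (Nat.floor u) / (Nat.factorial (Nat.floor u) : ℝ)))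
  · filter_upwards [eventually_ge_atTop (1:ℝ)] with u hu
    exact div_nonneg (Real.rpow_nonneg hc.le _) (Real.Gamma_pos_of_pos (by linarith)).le
  · filter_upwards [eventually_ge_atTop (1:ℝ)] with u hu
    have hfac : (0:ℝ) < (Nat.factorial (Nat.floor u) : ℝ) := by
      exact_mod_cast Nat.factorial_pos _
    have hnum : c ^ u ≤ d ^ (Nat.floor u + 1) := by
      calc c ^ u ≤ d ^ u := Real.rpow_le_rpow hc.le (le_max_left _ _) (by linarith)
        _ ≤ d ^ ((Nat.floor u + 1 : ℕ) : ℝ) := by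
            apply Real.rpow_le_rpow_of_exponent_le hd1
            push_cast
            exact (Nat.lt_floor_add_one u).le
        _ = d ^ (Nat.floor u + 1) := by
            rw [Real.rpow_natCast]
    have hden := gamma_floor_le hu
    have : c ^ u / Real.Gamma (u + 1) ≤ d ^ (Nat.floor u + 1) / (Nat.factorial (Nat.floor u) : ℝ) :=
      div_le_div₀ (by positivity) hnum hfac hden
    calc c ^ u / Real.Gamma (u + 1)
        ≤ d ^ (Nat.floor u + 1) / (Nat.factorial (Nat.floor u) : ℝ) := this
      _ = d * (d ^ (Nat.floor u) / (Nat.factorial (Nat.floor u) : ℝ)) := by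
          rw [pow_succ]; ring
  · exact hcomp

lemma cont_crpow {c : ℝ} (hc : 0 < c) : Continuous fun u : ℝ => c ^ u := by
  have h : (fun u : ℝ => c ^ u) = fun u => Real.exp (Real.log c * u) := by
    funext u; rw [Real.rpow_def_of_pos hc]
  rw [h]; fun_prop

lemma gamma_contOn : ContinuousOn (fun u : ℝ => Real.Gamma (u + 1)) (Ioi (-1:ℝ)) := by
  intro u hu
  have h1 : (0:ℝ) < u + 1 := by
    have := mem_Ioi.mp hu; linarith
  have hm : ∀ m : ℕ, u + 1 ≠ -m := by
    intro m hcontra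
    have : (0:ℝ) ≤ m := Nat.cast_nonneg m
    rw [hcontra] at h1; linarith
  have h2 : ContinuousAt Real.Gamma (u + 1) := (Real.differentiableAt_Gamma hm).continuousAt
  have h3 : ContinuousAt (fun y : ℝ => y + 1) u := by fun_prop
  have h4 : ContinuousAt (fun y : ℝ => Real.Gamma (y + 1)) u :=
    ContinuousAt.comp (g := Real.Gamma) (f := fun y : ℝ => y + 1) h2 h3
  exact h4.continuousWithinAt

lemma continuousOn_ratio {c : ℝ} (hc : 0 < c) :
    ContinuousOn (fun u : ℝ => c ^ u / Real.Gamma (u + 1)) (Ioi (-1)) := by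
  apply ContinuousOn.div
  · intro u _
    exact (Real.continuousAt_const_rpow hc.ne').continuousWithinAt
  · intro u hu
    have h1 : (0:ℝ) < u + 1 := by
      have := mem_Ioi.mp hu; linarith
    have hm : ∀ m : ℕ, u + 1 ≠ -m := by
      intro m hcontra
      have : (0:ℝ) ≤ m := Nat.cast_nonneg m
      rw [hcontra] at h1; linarith
    have h2 : ContinuousAt Real.Gamma (u + 1) := (Real.differentiableAt_Gamma hm).continuousAt
    have h3 : ContinuousAt (fun y : ℝ => y + 1) u := by fun_prop
    have h4 : ContinuousAt (fun y : ℝ => Real.Gamma (y + 1)) u :=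
      ContinuousAt.comp (g := Real.Gamma) (f := fun y : ℝ => y + 1) h2 h3
    exact h4.continuousWithinAt
  · intro u hu
    have h1 : (0:ℝ) < u + 1 := by
      have := mem_Ioi.mp hu; linarith
    exact (Real.Gamma_pos_of_pos h1).ne' 

lemma exists_bound {c : ℝ} (hc : 0 < c) :
    ∃ K : ℝ, 0 < K ∧ ∀ u : ℝ, 0 ≤ u → c ^ u / Real.Gamma (u + 1) ≤ K * Real.exp (-u) := by
  have hc' : (0:ℝ) < Real.exp 1 * c := mul_pos (Real.exp_pos 1) hc
  have htend := tendsto_rpow_div_Gamma hc'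
  have hev : ∀ᶠ u in atTop, (Real.exp 1 * c) ^ u / Real.Gamma (u + 1) < 1 :=
    htend.eventually_lt_const one_pos
  obtain ⟨M, hM⟩ := eventually_atTop.mp hev
  set M' : ℝ := max M 0 with hM'
  have hcont : ContinuousOn (fun u : ℝ => (Real.exp 1 * c) ^ u / Real.Gamma (u + 1)) (Icc 0 M') :=
    (continuousOn_ratio hc').mono (fun x hx => lt_of_lt_of_le (by norm_num) hx.1)
  obtain ⟨C, hC⟩ := isCompact_Icc.exists_bound_of_continuousOn hcont
  refine ⟨max C 1, lt_of_lt_of_le one_pos (le_max_right _ _), fun u hu => ?_⟩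
  have key : (Real.exp 1 * c) ^ u / Real.Gamma (u + 1) ≤ max C 1 := by
    rcases le_or_gt u M' with h | h
    · calc (Real.exp 1 * c) ^ u / Real.Gamma (u + 1)
          ≤ ‖(Real.exp 1 * c) ^ u / Real.Gamma (u + 1)‖ := le_norm_self _
        _ ≤ C := hC u ⟨hu, h⟩
        _ ≤ max C 1 := le_max_left _ _
    · exact le_trans (hM u (le_trans (le_max_left _ _) h.le)).le (le_max_right _ _)
  have hsplit : (Real.exp 1 * c) ^ u = Real.exp u * c ^ u := by
    rw [Real.mul_rpow (Real.exp_pos 1).le hc.le, ← Real.exp_one_rpow u]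
  have hgpos : (0:ℝ) < Real.Gamma (u + 1) := Real.Gamma_pos_of_pos (by linarith)
  rw [hsplit] at key
  have heq : c ^ u / Real.Gamma (u + 1)
      = (Real.exp u * c ^ u / Real.Gamma (u + 1)) * Real.exp (-u) := by
    rw [Real.exp_neg]
    field_simp
  rw [heq]
  exact mul_le_mul_of_nonneg_right key (Real.exp_pos _).le

lemma integrable_ratio {c : ℝ} (hc : 0 < c) :
    IntegrableOn (fun u : ℝ => c ^ u / Real.Gamma (u + 1)) (Ioi 0) := by
  obtain ⟨K, hK, hbound⟩ := exists_bound hc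
  have hexp : IntegrableOn (fun u : ℝ => Real.exp (-u)) (Ioi 0) := by
    simpa using exp_neg_integrableOn_Ioi 0 one_pos
  apply Integrable.mono' (hexp.const_mul K)
  · exact ((continuousOn_ratio hc).mono
      (fun x hx => lt_trans (by norm_num) (mem_Ioi.mp hx))).aestronglyMeasurable measurableSet_Ioi
  · filter_upwards [self_mem_ae_restrict (measurableSet_Ioi : MeasurableSet (Ioi (0:ℝ)))]
      with u hu
    have h1 : (0:ℝ) < Real.Gamma (u + 1) := Real.Gamma_pos_of_pos (by
      have := mem_Ioi.mp hu; linarith)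
    rw [Real.norm_eq_abs, abs_of_nonneg (div_nonneg (Real.rpow_nonneg hc.le _) h1.le)]
    exact hbound u (mem_Ioi.mp hu).le

lemma recip_gamma_bound {v : ℝ} (hv : v ∈ Ioo (-1:ℝ) 0) :
    0 < Real.Gamma (v + 1) ∧ 1 / Real.Gamma (v + 1) ≤ Real.exp 1 := by
  obtain ⟨hv1, hv2⟩ := hv
  have h1 : (0:ℝ) < v + 1 := by linarith
  have hpos := Real.Gamma_pos_of_pos h1
  refine ⟨hpos, ?_⟩
  have hadd : Real.Gamma (v + 1 + 1) = (v + 1) * Real.Gamma (v + 1) :=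
    Real.Gamma_add_one h1.ne'
  have hge : Real.exp (-1) ≤ Real.Gamma (v + 1 + 1) := gamma_ge_exp_neg_one (by linarith)
  rw [div_le_iff₀ hpos]
  have h2 : Real.exp (-1) ≤ (v + 1) * Real.Gamma (v + 1) := hadd ▸ hge
  calc (1:ℝ) = Real.exp 1 * Real.exp (-1) := by rw [← Real.exp_add]; norm_num
    _ ≤ Real.exp 1 * ((v + 1) * Real.Gamma (v + 1)) := by
        nlinarith [Real.exp_pos 1]
    _ ≤ Real.exp 1 * Real.Gamma (v + 1) := by
        have hle1 : (v + 1) * Real.Gamma (v + 1) ≤ Real.Gamma (v + 1) := by nlinarith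
        nlinarith [Real.exp_pos 1]

lemma integrable_Ioo {t : ℝ} (ht : 0 < t) :
    IntegrableOn (fun v : ℝ => t ^ v / Real.Gamma (v + 1)) (Ioo (-1) 0) := by
  have hconst : IntegrableOn (fun _ : ℝ => (max 1 t⁻¹) * Real.exp 1) (Ioo (-1:ℝ) 0) := by
    exact integrableOn_const measure_Ioo_lt_top.ne
  apply Integrable.mono' hconst
  · exact ((continuousOn_ratio ht).mono
      (fun x hx => hx.1)).aestronglyMeasurable measurableSet_Ioo
  · filter_upwards [self_mem_ae_restrict (measurableSet_Ioo : MeasurableSet (Ioo (-1:ℝ) 0))]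
      with v hv
    obtain ⟨hpos, hle⟩ := recip_gamma_bound hv
    have hrp : t ^ v ≤ max 1 t⁻¹ := by
      rcases le_or_gt 1 t with h | h
      · exact le_trans (Real.rpow_le_one_of_one_le_of_nonpos h hv.2.le) (le_max_left _ _)
      · calc t ^ v ≤ t ^ (-1:ℝ) :=
              Real.rpow_le_rpow_of_exponent_ge ht h.le (by linarith [hv.1])
          _ = t⁻¹ := by rw [Real.rpow_neg_one]
          _ ≤ _ := le_max_right _ _
    rw [Real.norm_eq_abs, abs_of_nonneg (div_nonneg (Real.rpow_nonneg ht.le _) hpos.le)]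
    rw [div_eq_mul_one_div]
    apply mul_le_mul hrp hle (by positivity) (by positivity)

lemma kernel_integrable : Integrable (fun x : ℝ => 1 / (x ^ 2 + π ^ 2)) := by
  apply Integrable.mono' integrable_inv_one_add_sq
  · apply Continuous.aestronglyMeasurable
    apply Continuous.div continuous_const
    · fun_prop
    · intro x
      positivity
  · filter_upwards with x
    have h1 : (0:ℝ) < 1 + x ^ 2 := by positivity
    have h2 : (0:ℝ) < x ^ 2 + π ^ 2 := by positivity
    rw [Real.norm_eq_abs, abs_of_nonneg (by positivity)]
    rw [one_div]
    apply inv_anti₀ h1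
    nlinarith [Real.pi_gt_three]

lemma kernel_integral : ∫ x : ℝ, 1 / (x ^ 2 + π ^ 2) = 1 := by
  have hmain : ∫ x : ℝ, (1 + (x / π) ^ 2)⁻¹ = π ^ 2 := by
    rw [MeasureTheory.Measure.integral_comp_div (fun y : ℝ => (1 + y ^ 2)⁻¹) π]
    rw [integral_univ_inv_one_add_sq, abs_of_pos Real.pi_pos]
    rw [smul_eq_mul, sq]
  have heq : ∀ x : ℝ, 1 / (x ^ 2 + π ^ 2) = (π ^ 2)⁻¹ * (1 + (x / π) ^ 2)⁻¹ := by
    intro x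
    have h2 : (0:ℝ) < x ^ 2 + π ^ 2 := by positivity
    field_simp
    ring
  simp_rw [heq]
  rw [MeasureTheory.integral_const_mul, hmain]
  field_simp

lemma mul_exp_neg_le_one {z : ℝ} (hz : 0 ≤ z) : z * Real.exp (-z) ≤ 1 := by
  have h := Real.add_one_le_exp z
  have hpos := Real.exp_pos z
  rw [Real.exp_neg]
  rw [mul_inv_le_iff₀ hpos, one_mul]
  linarith

lemma NN_integrand_integrable {t : ℝ} (ht : 0 ≤ t) :
    Integrable (fun x : ℝ => Real.exp (-(t * Real.exp x)) / (x ^ 2 + π ^ 2)) := by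
  apply Integrable.mono' kernel_integrable
  · apply Continuous.aestronglyMeasurable
    apply Continuous.div (by fun_prop) (by fun_prop)
    intro x; positivity
  · filter_upwards with x
    have h2 : (0:ℝ) < x ^ 2 + π ^ 2 := by positivity
    rw [Real.norm_eq_abs, abs_of_nonneg (by positivity), one_div]
    rw [div_eq_mul_inv]
    nth_rewrite 2 [← one_mul (x ^ 2 + π ^ 2)⁻¹]
    gcongr
    exact Real.exp_le_one_iff.mpr (neg_nonpos.mpr (by positivity))

lemma NN_deriv_integrand_integrable {t : ℝ} (ht : 0 < t) :
    Integrable (fun x : ℝ => Real.exp (-(t * Real.exp x)) * Real.exp x / (x ^ 2 + π ^ 2)) := by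
  apply Integrable.mono' (kernel_integrable.const_mul t⁻¹)
  · apply Continuous.aestronglyMeasurable
    apply Continuous.div (by fun_prop) (by fun_prop)
    intro x; positivity
  · filter_upwards with x
    have h2 : (0:ℝ) < x ^ 2 + π ^ 2 := by positivity
    have hkey : Real.exp (-(t * Real.exp x)) * Real.exp x ≤ t⁻¹ := by
      have h3 : (t * Real.exp x) * Real.exp (-(t * Real.exp x)) ≤ 1 :=
        mul_exp_neg_le_one (by positivity)
      calc Real.exp (-(t * Real.exp x)) * Real.exp x
          = (t * Real.exp x * Real.exp (-(t * Real.exp x))) / t := by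
            field_simp
        _ ≤ 1 / t := by gcongr
        _ = t⁻¹ := one_div t
    rw [Real.norm_eq_abs, abs_of_nonneg (by positivity), mul_one_div]
    gcongr

lemma NN_hasDeriv {t : ℝ} (ht : 0 < t) :
    HasDerivAt NNF (-∫ x : ℝ, Real.exp (-(t * Real.exp x)) * Real.exp x / (x ^ 2 + π ^ 2)) t := by
  have ht2 : (0:ℝ) < t / 2 := by linarith
  have key := hasDerivAt_integral_of_dominated_loc_of_deriv_le (μ := volume)
    (F := fun s x => Real.exp (-(s * Real.exp x)) / (x ^ 2 + π ^ 2))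
    (F' := fun s x => Real.exp (-(s * Real.exp x)) * (-Real.exp x) / (x ^ 2 + π ^ 2))
    (x₀ := t) (bound := fun x => (t / 2)⁻¹ * (1 / (x ^ 2 + π ^ 2))) (Metric.ball_mem_nhds t ht2)
    ?_ ?_ ?_ ?_ ?_ ?_
  · obtain ⟨-, hderiv⟩ := key
    have heq : (∫ x : ℝ, Real.exp (-(t * Real.exp x)) * (-Real.exp x) / (x ^ 2 + π ^ 2))
        = -∫ x : ℝ, Real.exp (-(t * Real.exp x)) * Real.exp x / (x ^ 2 + π ^ 2) := by
      rw [← MeasureTheory.integral_neg]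
      congr 1
      funext x
      ring
    rw [heq] at hderiv
    exact hderiv
  · filter_upwards with s
    apply Continuous.aestronglyMeasurable
    apply Continuous.div (by fun_prop) (by fun_prop)
    intro x; positivity
  · exact NN_integrand_integrable ht.le
  · apply Continuous.aestronglyMeasurable
    apply Continuous.div (by fun_prop) (by fun_prop)
    intro x; positivity
  · filter_upwards with x
    intro s hs
    have hs2 : t / 2 < s := by
      have := abs_lt.mp (mem_ball_iff_norm.mp hs)
      linarith [this.1]
    have h2 : (0:ℝ) < x ^ 2 + π ^ 2 := by positivity
    have hmono : Real.exp (-(s * Real.exp x)) ≤ Real.exp (-(t / 2 * Real.exp x)) := by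
      apply Real.exp_le_exp.mpr
      have := Real.exp_pos x
      nlinarith
    have hkey : Real.exp (-(t / 2 * Real.exp x)) * Real.exp x ≤ (t / 2)⁻¹ := by
      have h3 : (t / 2 * Real.exp x) * Real.exp (-(t / 2 * Real.exp x)) ≤ 1 :=
        mul_exp_neg_le_one (by positivity)
      calc Real.exp (-(t / 2 * Real.exp x)) * Real.exp x
          = (t / 2 * Real.exp x * Real.exp (-(t / 2 * Real.exp x))) / (t / 2) := by
            field_simp
        _ ≤ 1 / (t / 2) := by gcongr
        _ = (t / 2)⁻¹ := one_div _
    have hexp := Real.exp_pos x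
    rw [Real.norm_eq_abs, abs_div, abs_of_nonneg h2.le, mul_one_div, abs_mul, abs_neg,
      abs_of_pos hexp, abs_of_pos (Real.exp_pos _)]
    gcongr
    exact le_trans (mul_le_mul_of_nonneg_right hmono hexp.le) hkey
  · exact (kernel_integrable.const_mul _)
  · filter_upwards with x
    intro s hs
    have h2 : (0:ℝ) < x ^ 2 + π ^ 2 := by positivity
    have hd : HasDerivAt (fun s : ℝ => Real.exp (-(s * Real.exp x)))
        (Real.exp (-(s * Real.exp x)) * (-Real.exp x)) s := by
      have h1 : HasDerivAt (fun s : ℝ => -(s * Real.exp x)) (-Real.exp x) s :=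
        (hasDerivAt_mul_const (Real.exp x)).neg
      exact h1.exp
    exact hd.div_const _

lemma deriv_integral_rewrite {t : ℝ} (ht : 0 < t) :
    ∫ u in Ioi (0:ℝ), u * t ^ (u - 1) / Real.Gamma (u + 1)
      = nuF t + ∫ v in Ioo (-1:ℝ) 0, t ^ v / Real.Gamma (v + 1) := by
  have hstep1 : ∫ u in Ioi (0:ℝ), u * t ^ (u - 1) / Real.Gamma (u + 1)
      = ∫ u in Ioi (0:ℝ), t ^ (u - 1) / Real.Gamma u := by
    apply setIntegral_congr_fun measurableSet_Ioi
    intro u hu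
    have hu0 : (0:ℝ) < u := mem_Ioi.mp hu
    have hgpos : (0:ℝ) < Real.Gamma u := Real.Gamma_pos_of_pos hu0
    show u * t ^ (u - 1) / Real.Gamma (u + 1) = t ^ (u - 1) / Real.Gamma u
    rw [Real.Gamma_add_one hu0.ne']
    field_simp
  have hstep2 : ∫ u in Ioi (0:ℝ), t ^ (u - 1) / Real.Gamma u
      = ∫ v in Ioi (-1:ℝ), t ^ v / Real.Gamma (v + 1) := by
    have h1 : ∫ u in Ioi (0:ℝ), t ^ (u - 1) / Real.Gamma u
        = ∫ u, (Ioi (0:ℝ)).indicator (fun u => t ^ (u - 1) / Real.Gamma u) u := by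
      rw [integral_indicator measurableSet_Ioi]
    have h2 : ∫ v in Ioi (-1:ℝ), t ^ v / Real.Gamma (v + 1)
        = ∫ v, (Ioi (-1:ℝ)).indicator (fun v => t ^ v / Real.Gamma (v + 1)) v := by
      rw [integral_indicator measurableSet_Ioi]
    rw [h1, h2]
    rw [← integral_add_right_eq_self
      (fun u => (Ioi (0:ℝ)).indicator (fun u => t ^ (u - 1) / Real.Gamma u) u) 1]
    congr 1
    funext v
    by_cases hv : v ∈ Ioi (-1:ℝ)
    · have hv1 : v + 1 ∈ Ioi (0:ℝ) := by
        simp only [mem_Ioi] at *; linarith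
      rw [indicator_of_mem hv1, indicator_of_mem hv]
      simp
    · have hv1 : v + 1 ∉ Ioi (0:ℝ) := by
        simp only [mem_Ioi] at *; linarith
      rw [indicator_of_notMem hv1, indicator_of_notMem hv]
  have hsplit : Ioo (-1:ℝ) 0 ∪ Ici (0:ℝ) = Ioi (-1:ℝ) := Ioo_union_Ici_eq_Ioi (by norm_num)
  have hdisj : Disjoint (Ioo (-1:ℝ) 0) (Ici (0:ℝ)) := by
    apply Set.disjoint_left.mpr
    intro x hx hx2
    exact absurd (mem_Ici.mp hx2) (not_le.mpr hx.2)
  have hIci : IntegrableOn (fun v : ℝ => t ^ v / Real.Gamma (v + 1)) (Ici 0) := by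
    rw [integrableOn_Ici_iff_integrableOn_Ioi]
    exact integrable_ratio ht
  have hsum : ∫ v in Ioi (-1:ℝ), t ^ v / Real.Gamma (v + 1)
      = (∫ v in Ioo (-1:ℝ) 0, t ^ v / Real.Gamma (v + 1))
        + ∫ v in Ici (0:ℝ), t ^ v / Real.Gamma (v + 1) := by
    rw [← hsplit]
    exact setIntegral_union hdisj measurableSet_Ici (integrable_Ioo ht) hIci
  rw [hstep1, hstep2, hsum, integral_Ici_eq_integral_Ioi]
  rw [add_comm]
  rfl

lemma nu_hasDeriv {t : ℝ} (ht : 0 < t) :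
    HasDerivAt nuF (nuF t + ∫ v in Ioo (-1:ℝ) 0, t ^ v / Real.Gamma (v + 1)) t := by
  have ht2 : (0:ℝ) < t / 2 := by linarith
  set M : ℝ := max (t + t) 1 with hM
  have hM1 : (1:ℝ) ≤ M := le_max_right _ _
  have hM0 : (0:ℝ) < M := by linarith
  have heM : (0:ℝ) < Real.exp 1 * M := by positivity
  have key := hasDerivAt_integral_of_dominated_loc_of_deriv_le
    (μ := volume.restrict (Ioi (0:ℝ)))
    (F := fun s u => s ^ u / Real.Gamma (u + 1))
    (F' := fun s u => u * s ^ (u - 1) / Real.Gamma (u + 1))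
    (x₀ := t) (bound := fun u => (t / 2)⁻¹ * ((Real.exp 1 * M) ^ u / Real.Gamma (u + 1))) (Metric.ball_mem_nhds t ht2)
    ?_ ?_ ?_ ?_ ?_ ?_
  · obtain ⟨-, hderiv⟩ := key
    rw [deriv_integral_rewrite ht] at hderiv
    exact hderiv
  · filter_upwards [eventually_gt_nhds (show t / 2 < t by linarith)] with s hs
    exact ((continuousOn_ratio (lt_trans ht2 hs)).mono
      (fun x hx => lt_trans (by norm_num) (mem_Ioi.mp hx))).aestronglyMeasurable measurableSet_Ioi
  · exact integrable_ratio ht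
  · apply ContinuousOn.aestronglyMeasurable _ measurableSet_Ioi
    apply ContinuousOn.div
    · exact (continuous_id.mul ((cont_crpow ht).comp (continuous_sub_right 1))).continuousOn
    · exact gamma_contOn.mono (fun x hx => lt_trans (by norm_num) (mem_Ioi.mp hx))
    · intro u hu
      exact (Real.Gamma_pos_of_pos (by linarith [mem_Ioi.mp hu])).ne'
  · filter_upwards [self_mem_ae_restrict (measurableSet_Ioi : MeasurableSet (Ioi (0:ℝ)))]
      with u hu s hs
    have hu0 : (0:ℝ) < u := mem_Ioi.mp hu
    obtain ⟨hs1, hs2⟩ : t / 2 < s ∧ s < t + t := by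
      have := abs_lt.mp (mem_ball_iff_norm.mp hs)
      constructor <;> linarith [this.1, this.2]
    have hs0 : (0:ℝ) < s := lt_trans ht2 hs1
    have hgpos : (0:ℝ) < Real.Gamma (u + 1) := Real.Gamma_pos_of_pos (by linarith)
    rw [Real.norm_eq_abs, abs_of_nonneg (by positivity)]
    have hkey : u * s ^ (u - 1) ≤ (t / 2)⁻¹ * (Real.exp 1 * M) ^ u := by
      have h1 : s ^ (u - 1) = s ^ u / s := by
        rw [Real.rpow_sub hs0, Real.rpow_one]
      have h2 : s ^ u ≤ M ^ u := by
        apply Real.rpow_le_rpow hs0.le _ hu0.le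
        exact le_trans hs2.le (le_max_left _ _)
      have h3 : u ≤ Real.exp u := by
        linarith [Real.add_one_le_exp u]
      have h4 : (Real.exp 1 * M) ^ u = Real.exp u * M ^ u := by
        rw [Real.mul_rpow (Real.exp_pos 1).le hM0.le, Real.exp_one_rpow]
      rw [h1, h4]
      have h5 : u * (s ^ u / s) ≤ u * (M ^ u / (t / 2)) := by
        apply mul_le_mul_of_nonneg_left _ hu0.le
        apply div_le_div₀ (by positivity) h2 ht2 hs1.le
      calc u * (s ^ u / s) ≤ u * (M ^ u / (t / 2)) := h5
        _ = (t / 2)⁻¹ * (u * M ^ u) := by ring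
        _ ≤ (t / 2)⁻¹ * (Real.exp u * M ^ u) := by
            apply mul_le_mul_of_nonneg_left _ (by positivity)
            exact mul_le_mul_of_nonneg_right h3 (by positivity)
    calc u * s ^ (u - 1) / Real.Gamma (u + 1)
        ≤ ((t / 2)⁻¹ * (Real.exp 1 * M) ^ u) / Real.Gamma (u + 1) := by gcongr
      _ = (t / 2)⁻¹ * ((Real.exp 1 * M) ^ u / Real.Gamma (u + 1)) := by ring
  · exact (integrable_ratio heM).const_mul _
  · filter_upwards [self_mem_ae_restrict (measurableSet_Ioi : MeasurableSet (Ioi (0:ℝ)))]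
      with u hu s hs
    have hs0 : (0:ℝ) < s := by
      have := abs_lt.mp (mem_ball_iff_norm.mp hs)
      linarith [this.1]
    exact (Real.hasDerivAt_rpow_const (Or.inl hs0.ne')).div_const _

lemma change_var_scaled {t : ℝ} (ht : 0 < t) (g : ℝ → ℝ) :
    ∫ r in Ioi (0:ℝ), g r = ∫ x : ℝ, (t * Real.exp x) * g (t * Real.exp x) := by
  have himg : (fun x : ℝ => t * Real.exp x) '' univ = Ioi 0 := by
    rw [Set.image_univ]
    ext y
    simp only [mem_range, mem_Ioi]
    constructor
    · rintro ⟨x, rfl⟩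
      positivity
    · intro hy
      refine ⟨Real.log (y / t), ?_⟩
      rw [Real.exp_log (by positivity)]
      field_simp
  have hderiv : ∀ x ∈ (univ : Set ℝ), HasDerivWithinAt (fun x : ℝ => t * Real.exp x)
      (t * Real.exp x) univ x := fun x _ =>
    ((Real.hasDerivAt_exp x).const_mul t).hasDerivWithinAt
  have hinj : InjOn (fun x : ℝ => t * Real.exp x) univ := by
    intro a _ b _ h
    simp only at h
    exact Real.exp_injective (mul_left_cancel₀ ht.ne' h)
  calc ∫ r in Ioi (0:ℝ), g r
      = ∫ r in (fun x : ℝ => t * Real.exp x) '' univ, g r := by rw [himg]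
    _ = ∫ x in (univ : Set ℝ), |t * Real.exp x| • g (t * Real.exp x) :=
        integral_image_eq_integral_abs_deriv_smul MeasurableSet.univ hderiv hinj g
    _ = ∫ x : ℝ, (t * Real.exp x) * g (t * Real.exp x) := by
        rw [MeasureTheory.setIntegral_univ]
        congr 1
        funext x
        rw [abs_of_pos (by positivity), smul_eq_mul]

lemma integrable_inner {t v : ℝ} (ht : 0 < t) (hv : v ∈ Ioo (-1:ℝ) 0) :
    Integrable (fun x : ℝ => Real.exp (-(t * Real.exp x)) * Real.exp (-(v * x))) := by
  obtain ⟨hv1, hv2⟩ := hv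
  have hnv : (0:ℝ) < -v := by linarith
  have hconv : IntegrableOn (fun s : ℝ => Real.exp (-s) * s ^ (-v - 1)) (Ioi 0) :=
    Real.GammaIntegral_convergent hnv
  have himg : (fun x : ℝ => t * Real.exp x) '' univ = Ioi 0 := by
    rw [Set.image_univ]
    ext y
    simp only [mem_range, mem_Ioi]
    constructor
    · rintro ⟨x, rfl⟩
      positivity
    · intro hy
      refine ⟨Real.log (y / t), ?_⟩
      rw [Real.exp_log (by positivity)]
      field_simp
  have hderiv : ∀ x ∈ (univ : Set ℝ), HasDerivWithinAt (fun x : ℝ => t * Real.exp x)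
      (t * Real.exp x) univ x := fun x _ =>
    ((Real.hasDerivAt_exp x).const_mul t).hasDerivWithinAt
  have hinj : InjOn (fun x : ℝ => t * Real.exp x) univ := by
    intro a _ b _ h
    simp only at h
    exact Real.exp_injective (mul_left_cancel₀ ht.ne' h)
  rw [← himg] at hconv
  have := (integrableOn_image_iff_integrableOn_abs_deriv_smul MeasurableSet.univ hderiv hinj
    (fun s : ℝ => Real.exp (-s) * s ^ (-v - 1))).mp hconv
  rw [integrableOn_univ] at this
  have halg : ∀ x : ℝ, |t * Real.exp x| • (Real.exp (-(t * Real.exp x))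
      * (t * Real.exp x) ^ (-v - 1))
      = t ^ (-v) * (Real.exp (-(t * Real.exp x)) * Real.exp (-(v * x))) := by
    intro x
    have hpos : (0:ℝ) < t * Real.exp x := by positivity
    rw [abs_of_pos hpos, smul_eq_mul]
    have h1 : (t * Real.exp x) ^ (-v - 1) = (t * Real.exp x) ^ (-v) / (t * Real.exp x) := by
      rw [Real.rpow_sub hpos, Real.rpow_one]
    have h2 : (t * Real.exp x) ^ (-v) = t ^ (-v) * Real.exp (-(v * x)) := by
      rw [Real.mul_rpow ht.le (Real.exp_pos x).le]
      congr 1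
      rw [Real.rpow_def_of_pos (Real.exp_pos x), Real.log_exp]
      congr 1
      ring
    rw [h1, h2]
    field_simp
  have heq : (fun x : ℝ => Real.exp (-(t * Real.exp x)) * Real.exp (-(v * x)))
      = fun x : ℝ => (t ^ (-v))⁻¹ * (|t * Real.exp x| • (Real.exp (-(t * Real.exp x))
        * (t * Real.exp x) ^ (-v - 1))) := by
    funext x
    rw [halg x]
    have htv : (0:ℝ) < t ^ (-v) := Real.rpow_pos_of_pos ht _
    field_simp
  rw [heq]
  exact this.const_mul _

lemma inner_value {t v : ℝ} (ht : 0 < t) (hv : v ∈ Ioo (-1:ℝ) 0) :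
    ∫ x : ℝ, Real.exp (-(t * Real.exp x)) * Real.exp (-(v * x))
      = t ^ v * Real.Gamma (-v) := by
  obtain ⟨hv1, hv2⟩ := hv
  have hnv : (0:ℝ) < -v := by linarith
  have hG : Real.Gamma (-v) = ∫ s in Ioi (0:ℝ), Real.exp (-s) * s ^ (-v - 1) :=
    Real.Gamma_eq_integral hnv
  rw [change_var_scaled ht (fun s : ℝ => Real.exp (-s) * s ^ (-v - 1))] at hG
  have halg : ∀ x : ℝ, (t * Real.exp x) * (Real.exp (-(t * Real.exp x))
      * (t * Real.exp x) ^ (-v - 1))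
      = t ^ (-v) * (Real.exp (-(t * Real.exp x)) * Real.exp (-(v * x))) := by
    intro x
    have hpos : (0:ℝ) < t * Real.exp x := by positivity
    have h1 : (t * Real.exp x) ^ (-v - 1) = (t * Real.exp x) ^ (-v) / (t * Real.exp x) := by
      rw [Real.rpow_sub hpos, Real.rpow_one]
    have h2 : (t * Real.exp x) ^ (-v) = t ^ (-v) * Real.exp (-(v * x)) := by
      rw [Real.mul_rpow ht.le (Real.exp_pos x).le]
      congr 1
      rw [Real.rpow_def_of_pos (Real.exp_pos x), Real.log_exp]
      congr 1
      ring
    rw [h1, h2]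
    field_simp
  simp_rw [halg] at hG
  rw [MeasureTheory.integral_const_mul] at hG
  have htv : (0:ℝ) < t ^ (-v) := Real.rpow_pos_of_pos ht _
  have htv2 : t ^ v * t ^ (-v) = 1 := by
    rw [← Real.rpow_add ht]
    norm_num
  calc ∫ x : ℝ, Real.exp (-(t * Real.exp x)) * Real.exp (-(v * x))
      = (t ^ v * t ^ (-v)) * ∫ x : ℝ, Real.exp (-(t * Real.exp x)) * Real.exp (-(v * x)) := by
        rw [htv2, one_mul]
    _ = t ^ v * (t ^ (-v) * ∫ x : ℝ, Real.exp (-(t * Real.exp x)) * Real.exp (-(v * x))) := by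
        ring
    _ = t ^ v * Real.Gamma (-v) := by rw [← hG]

lemma gamma_reflection {v : ℝ} (hv : v ∈ Ioo (-1:ℝ) 0) :
    Real.sin (π * (v + 1)) * Real.Gamma (-v) = π / Real.Gamma (v + 1) := by
  obtain ⟨hv1, hv2⟩ := hv
  have h1 : (0:ℝ) < v + 1 := by linarith
  have hrefl := Real.Gamma_mul_Gamma_one_sub (v + 1)
  have heq : (1:ℝ) - (v + 1) = -v := by ring
  rw [heq] at hrefl
  have hsin : (0:ℝ) < Real.sin (π * (v + 1)) := by
    apply Real.sin_pos_of_pos_of_lt_pi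
    · positivity
    · nlinarith [Real.pi_pos]
  have hgpos : (0:ℝ) < Real.Gamma (v + 1) := Real.Gamma_pos_of_pos h1
  rw [eq_div_iff hsin.ne'] at hrefl
  rw [eq_div_iff hgpos.ne']
  linear_combination hrefl

lemma sin_integral (x : ℝ) :
    ∫ v in Ioo (-1:ℝ) 0, Real.sin (π * (v + 1)) * Real.exp (-(v * x))
      = π * (Real.exp x + 1) / (x ^ 2 + π ^ 2) := by
  have hD : (0:ℝ) < x ^ 2 + π ^ 2 := by positivity
  set F : ℝ → ℝ := fun v => (Real.exp (-(v * x))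
    * (-(x * Real.sin (π * (v + 1))) - π * Real.cos (π * (v + 1)))) / (x ^ 2 + π ^ 2) with hF
  have hderiv : ∀ v ∈ uIcc (-1:ℝ) 0,
      HasDerivAt F (Real.sin (π * (v + 1)) * Real.exp (-(v * x))) v := by
    intro v _
    have h1 : HasDerivAt (fun v : ℝ => -(v * x)) (-x) v := (hasDerivAt_mul_const x).neg
    have h2 := h1.exp
    have h3 : HasDerivAt (fun v : ℝ => π * (v + 1)) π v := by
      simpa using ((hasDerivAt_id v).add_const 1).const_mul π
    have h4 := h3.sin
    have h5 := h3.cos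
    have hnum := h2.mul (((h4.const_mul x).neg).sub (h5.const_mul π))
    have := hnum.div_const (x ^ 2 + π ^ 2)
    refine this.congr_deriv ?_
    simp only [Pi.neg_apply, Pi.sub_apply]
    field_simp
    ring
  have hcont : IntervalIntegrable (fun v : ℝ => Real.sin (π * (v + 1)) * Real.exp (-(v * x)))
      volume (-1) 0 := by
    apply Continuous.intervalIntegrable
    fun_prop
  have hint := intervalIntegral.integral_eq_sub_of_hasDerivAt hderiv hcont
  rw [← integral_Ioc_eq_integral_Ioo,
    ← intervalIntegral.integral_of_le (by norm_num : (-1:ℝ) ≤ 0), hint]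
  have hF0 : F 0 = π / (x ^ 2 + π ^ 2) := by
    simp only [hF]
    norm_num [Real.sin_pi, Real.cos_pi]
  have hFm1 : F (-1) = Real.exp x * (-π) / (x ^ 2 + π ^ 2) := by
    simp only [hF]
    norm_num
  rw [hF0, hFm1]
  field_simp
  ring

lemma fubini_identity {t : ℝ} (ht : 0 < t) :
    ∫ v in Ioo (-1:ℝ) 0, t ^ v / Real.Gamma (v + 1)
      = ∫ x : ℝ, Real.exp (-(t * Real.exp x)) * (Real.exp x + 1) / (x ^ 2 + π ^ 2) := by
  have hπ := Real.pi_pos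
  have hHcont : Continuous (Function.uncurry fun v x : ℝ =>
      Real.sin (π * (v + 1)) * (Real.exp (-(t * Real.exp x)) * Real.exp (-(v * x)))) := by
    apply Continuous.mul
    · fun_prop
    · apply Continuous.mul
      · fun_prop
      · apply Real.continuous_exp.comp
        fun_prop
  have hswap_int : Integrable (Function.uncurry fun v x : ℝ =>
      Real.sin (π * (v + 1)) * (Real.exp (-(t * Real.exp x)) * Real.exp (-(v * x))))
      ((volume.restrict (Ioo (-1:ℝ) 0)).prod volume) := by
    rw [MeasureTheory.integrable_prod_iff hHcont.aestronglyMeasurable]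
    constructor
    · filter_upwards [self_mem_ae_restrict (measurableSet_Ioo : MeasurableSet (Ioo (-1:ℝ) 0))]
        with v hv
      simpa [Function.uncurry] using (integrable_inner ht hv).const_mul (Real.sin (π * (v + 1)))
    · apply Integrable.congr (((integrable_Ioo ht).const_mul π))
      filter_upwards [self_mem_ae_restrict (measurableSet_Ioo : MeasurableSet (Ioo (-1:ℝ) 0))]
        with v hv
      have hsin : (0:ℝ) ≤ Real.sin (π * (v + 1)) := by
        apply Real.sin_nonneg_of_nonneg_of_le_pi
        · nlinarith [hv.1]
        · nlinarith [hv.2]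
      have hnn : ∀ x : ℝ, ‖Real.sin (π * (v + 1))
          * (Real.exp (-(t * Real.exp x)) * Real.exp (-(v * x)))‖
          = Real.sin (π * (v + 1)) * (Real.exp (-(t * Real.exp x)) * Real.exp (-(v * x))) := by
        intro x
        rw [Real.norm_eq_abs, abs_of_nonneg (by positivity)]
      simp only [Function.uncurry]
      simp only [hnn]
      rw [MeasureTheory.integral_const_mul, inner_value ht hv]
      have hr := gamma_reflection hv
      have hg := (recip_gamma_bound hv).1
      calc π * (t ^ v / Real.Gamma (v + 1))
          = t ^ v * (π / Real.Gamma (v + 1)) := by ring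
        _ = t ^ v * (Real.sin (π * (v + 1)) * Real.Gamma (-v)) := by rw [hr]
        _ = Real.sin (π * (v + 1)) * (t ^ v * Real.Gamma (-v)) := by ring
  have hpt : ∀ v ∈ Ioo (-1:ℝ) 0, t ^ v / Real.Gamma (v + 1)
      = (1 / π) * ∫ x : ℝ, Real.sin (π * (v + 1))
          * (Real.exp (-(t * Real.exp x)) * Real.exp (-(v * x))) := by
    intro v hv
    rw [MeasureTheory.integral_const_mul, inner_value ht hv]
    have hr := gamma_reflection hv
    have hg := (recip_gamma_bound hv).1
    calc t ^ v / Real.Gamma (v + 1)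
        = t ^ v * (π / Real.Gamma (v + 1)) / π := by
          field_simp
      _ = t ^ v * (Real.sin (π * (v + 1)) * Real.Gamma (-v)) / π := by rw [hr]
      _ = 1 / π * (Real.sin (π * (v + 1)) * (t ^ v * Real.Gamma (-v))) := by ring
  calc ∫ v in Ioo (-1:ℝ) 0, t ^ v / Real.Gamma (v + 1)
      = ∫ v in Ioo (-1:ℝ) 0, (1 / π) * ∫ x : ℝ, Real.sin (π * (v + 1))
          * (Real.exp (-(t * Real.exp x)) * Real.exp (-(v * x))) :=
        setIntegral_congr_fun measurableSet_Ioo hpt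
    _ = (1 / π) * ∫ v in Ioo (-1:ℝ) 0, ∫ x : ℝ, Real.sin (π * (v + 1))
          * (Real.exp (-(t * Real.exp x)) * Real.exp (-(v * x))) :=
        MeasureTheory.integral_const_mul _ _
    _ = (1 / π) * ∫ x : ℝ, ∫ v in Ioo (-1:ℝ) 0, Real.sin (π * (v + 1))
          * (Real.exp (-(t * Real.exp x)) * Real.exp (-(v * x))) := by
        rw [MeasureTheory.integral_integral_swap hswap_int]
    _ = (1 / π) * ∫ x : ℝ, Real.exp (-(t * Real.exp x))
          * (π * (Real.exp x + 1) / (x ^ 2 + π ^ 2)) := by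
        congr 1
        apply MeasureTheory.integral_congr_ae
        filter_upwards with x
        have hre : ∀ v : ℝ, Real.sin (π * (v + 1))
            * (Real.exp (-(t * Real.exp x)) * Real.exp (-(v * x)))
            = Real.exp (-(t * Real.exp x)) * (Real.sin (π * (v + 1)) * Real.exp (-(v * x))) := by
          intro v; ring
        simp only [hre]
        rw [MeasureTheory.integral_const_mul, sin_integral x]
    _ = ∫ x : ℝ, Real.exp (-(t * Real.exp x)) * (Real.exp x + 1) / (x ^ 2 + π ^ 2) := by
        rw [← MeasureTheory.integral_const_mul]
        congr 1
        funext x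
        have h2 : (0:ℝ) < x ^ 2 + π ^ 2 := by positivity
        field_simp

lemma sum_integrands {t : ℝ} (ht : 0 < t) :
    ∫ x : ℝ, Real.exp (-(t * Real.exp x)) * (Real.exp x + 1) / (x ^ 2 + π ^ 2)
      = (∫ x : ℝ, Real.exp (-(t * Real.exp x)) * Real.exp x / (x ^ 2 + π ^ 2)) + NNF t := by
  have heq : ∀ x : ℝ, Real.exp (-(t * Real.exp x)) * (Real.exp x + 1) / (x ^ 2 + π ^ 2)
      = Real.exp (-(t * Real.exp x)) * Real.exp x / (x ^ 2 + π ^ 2)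
        + Real.exp (-(t * Real.exp x)) / (x ^ 2 + π ^ 2) := by
    intro x
    have h2 : (0:ℝ) < x ^ 2 + π ^ 2 := by positivity
    field_simp
  simp only [heq]
  rw [MeasureTheory.integral_add (NN_deriv_integrand_integrable ht)
    (NN_integrand_integrable ht.le)]
  rfl

lemma nu_tendsto : Tendsto nuF (nhdsWithin 0 (Ioi 0)) (nhds 0) := by
  have hbound_int : IntegrableOn (fun u : ℝ => 1 / Real.Gamma (u + 1)) (Ioi 0) := by
    have := integrable_ratio one_pos
    simpa [Real.one_rpow] using this
  have h := MeasureTheory.tendsto_integral_filter_of_dominated_convergence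
    (μ := volume.restrict (Ioi (0:ℝ))) (F := fun (t : ℝ) (u : ℝ) => t ^ u / Real.Gamma (u + 1))
    (f := fun _ => (0:ℝ)) (bound := fun u => 1 / Real.Gamma (u + 1))
    (l := nhdsWithin 0 (Ioi 0)) ?_ ?_ ?_ ?_
  · unfold nuF
    simpa using h
  · filter_upwards [self_mem_nhdsWithin] with s hs
    exact ((continuousOn_ratio (mem_Ioi.mp hs)).mono
      (fun x hx => lt_trans (by norm_num) (mem_Ioi.mp hx))).aestronglyMeasurable measurableSet_Ioi
  · have hIoc : Ioc (0:ℝ) 1 ∈ nhdsWithin (0:ℝ) (Ioi 0) :=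
      Ioc_mem_nhdsGT_of_mem (by constructor <;> norm_num)
    filter_upwards [hIoc] with s hs
    filter_upwards [self_mem_ae_restrict (measurableSet_Ioi : MeasurableSet (Ioi (0:ℝ)))]
      with u hu
    have hu0 : (0:ℝ) < u := mem_Ioi.mp hu
    have hg : (0:ℝ) < Real.Gamma (u + 1) := Real.Gamma_pos_of_pos (by linarith)
    rw [Real.norm_eq_abs, abs_of_nonneg (div_nonneg (Real.rpow_nonneg hs.1.le _) hg.le)]
    gcongr
    exact Real.rpow_le_one hs.1.le hs.2 hu0.le
  · exact hbound_int
  · filter_upwards [self_mem_ae_restrict (measurableSet_Ioi : MeasurableSet (Ioi (0:ℝ)))]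
      with u hu
    have hu0 : (0:ℝ) < u := mem_Ioi.mp hu
    have h1 : Tendsto (fun s : ℝ => s ^ u) (nhdsWithin 0 (Ioi 0)) (nhds 0) := by
      have hc : ContinuousAt (fun s : ℝ => s ^ u) 0 :=
        Real.continuousAt_rpow_const 0 u (Or.inr hu0.le)
      have := hc.tendsto
      rw [Real.zero_rpow hu0.ne'] at this
      exact this.mono_left nhdsWithin_le_nhds
    have := h1.div_const (Real.Gamma (u + 1))
    simpa using this

lemma NN_tendsto : Tendsto NNF (nhdsWithin 0 (Ioi 0)) (nhds 1) := by
  have h := MeasureTheory.tendsto_integral_filter_of_dominated_convergence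
    (μ := (volume : Measure ℝ))
    (F := fun (t : ℝ) (x : ℝ) => Real.exp (-(t * Real.exp x)) / (x ^ 2 + π ^ 2))
    (f := fun x : ℝ => 1 / (x ^ 2 + π ^ 2)) (bound := fun x => 1 / (x ^ 2 + π ^ 2))
    (l := nhdsWithin 0 (Ioi 0)) ?_ ?_ ?_ ?_
  · unfold NNF
    rw [kernel_integral] at h
    exact h
  · filter_upwards with s
    apply Continuous.aestronglyMeasurable
    apply Continuous.div (by fun_prop) (by fun_prop)
    intro x; positivity
  · filter_upwards [self_mem_nhdsWithin] with s hs
    filter_upwards with x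
    have hs0 : (0:ℝ) < s := mem_Ioi.mp hs
    have h2 : (0:ℝ) < x ^ 2 + π ^ 2 := by positivity
    rw [Real.norm_eq_abs, abs_of_nonneg (by positivity)]
    gcongr
    exact Real.exp_le_one_iff.mpr (neg_nonpos.mpr (by positivity))
  · exact kernel_integrable
  · filter_upwards with x
    have h2 : (0:ℝ) < x ^ 2 + π ^ 2 := by positivity
    have hc : ContinuousAt (fun s : ℝ => Real.exp (-(s * Real.exp x)) / (x ^ 2 + π ^ 2)) 0 := by
      apply ContinuousAt.div _ continuousAt_const h2.ne'
      apply Real.continuous_exp.continuousAt.comp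
      fun_prop
    have := hc.tendsto
    simp only [zero_mul, neg_zero, Real.exp_zero] at this
    exact this.mono_left nhdsWithin_le_nhds

lemma main_eq {t : ℝ} (ht : 0 < t) : nuF t = Real.exp t - NNF t := by
  set h : ℝ → ℝ := fun s => nuF s - Real.exp s + NNF s with hh
  set g : ℝ → ℝ := fun s => Real.exp (-s) * h s with hg
  have hder : ∀ s : ℝ, 0 < s → HasDerivAt h (h s) s := by
    intro s hs
    have hnu := nu_hasDeriv hs
    have hNN := NN_hasDeriv hs
    have hexp := Real.hasDerivAt_exp s
    have hkey : nuF s + (∫ v in Ioo (-1:ℝ) 0, s ^ v / Real.Gamma (v + 1)) - Real.exp s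
        + (-∫ x : ℝ, Real.exp (-(s * Real.exp x)) * Real.exp x / (x ^ 2 + π ^ 2)) = h s := by
      rw [fubini_identity hs, sum_integrands hs, hh]
      ring
    have := (hnu.sub hexp).add hNN
    rw [hkey] at this
    exact this
  have hgder : ∀ s : ℝ, 0 < s → HasDerivAt g 0 s := by
    intro s hs
    have h1 : HasDerivAt (fun s : ℝ => Real.exp (-s)) (Real.exp (-s) * (-1)) s := by
      exact (hasDerivAt_neg s).exp.congr_deriv (by ring)
    have h2 := h1.mul (hder s hs)
    have : Real.exp (-s) * (-1) * h s + Real.exp (-s) * h s = 0 := by ring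
    rw [this] at h2
    exact h2
  have hconst : ∀ a : ℝ, 0 < a → a ≤ t → g t = g a := by
    intro a ha hat
    have := constant_of_has_deriv_right_zero (f := g) (a := a) (b := t)
      (fun s hs => ((hgder s (lt_of_lt_of_le ha hs.1)).continuousAt).continuousWithinAt)
      (fun s hs => ((hgder s (lt_of_lt_of_le ha hs.1)).hasDerivWithinAt))
    exact this t ⟨hat, le_refl t⟩
  have htend0 : Tendsto g (nhdsWithin 0 (Ioi 0)) (nhds 0) := by
    have hexp : Tendsto (fun s : ℝ => Real.exp (-s)) (nhdsWithin 0 (Ioi 0)) (nhds 1) := by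
      have : ContinuousAt (fun s : ℝ => Real.exp (-s)) 0 := by fun_prop
      have h := this.tendsto
      simp only [neg_zero, Real.exp_zero] at h
      exact h.mono_left nhdsWithin_le_nhds
    have hexp2 : Tendsto (fun s : ℝ => Real.exp s) (nhdsWithin 0 (Ioi 0)) (nhds 1) := by
      have h := Real.continuous_exp.continuousAt (x := (0:ℝ)).tendsto
      simp only [Real.exp_zero] at h
      exact h.mono_left nhdsWithin_le_nhds
    have hh' : Tendsto h (nhdsWithin 0 (Ioi 0)) (nhds 0) := by
      have := (nu_tendsto.sub hexp2).add NN_tendsto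
      simpa using this
    have := hexp.mul hh'
    simpa using this
  have htendc : Tendsto g (nhdsWithin 0 (Ioi 0)) (nhds (g t)) := by
    apply Tendsto.congr' _ tendsto_const_nhds
    filter_upwards [Ioc_mem_nhdsGT_of_mem (show (0:ℝ) ∈ Ico (0:ℝ) t by exact ⟨le_refl 0, ht⟩)]
      with a ha
    exact hconst a ha.1 ha.2
  have hgt : g t = 0 := tendsto_nhds_unique htendc htend0
  have hexpne : Real.exp (-t) ≠ 0 := (Real.exp_pos _).ne'
  have hht : h t = 0 := by
    by_contra hne
    exact hne (by
      have := hgt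
      rw [hg] at this
      simp only at this
      rcases mul_eq_zero.mp this with h1 | h1
      · exact absurd h1 hexpne
      · exact h1)
  rw [hh] at hht
  simp only at hht
  linarith [hht]

/-- The Ramanujan identity: for `t > 0`,
`ν(t) = e^t − N(t)`, where `ν(t) = ∫₀^∞ t^u / Γ(u+1) du` and
`N(t) = ∫₀^∞ e^(-rt) / ( r ((log r)² + π²) ) dr`. -/
theorem ramanujan_identity (t : ℝ) (ht : 0 < t) :
    ∫ u in Ioi (0 : ℝ), t ^ u / Real.Gamma (u + 1) =
      Real.exp t -
        ∫ r in Ioi (0 : ℝ),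
          Real.exp (-r * t) / (r * ((Real.log r) ^ 2 + π ^ 2)) := by
  have h1 : ∫ r in Ioi (0 : ℝ), Real.exp (-r * t) / (r * ((Real.log r) ^ 2 + π ^ 2))
      = NNF t := by
    rw [change_var_scaled one_pos (fun r => Real.exp (-r * t) / (r * ((Real.log r) ^ 2 + π ^ 2)))]
    unfold NNF
    congr 1
    funext x
    have hex := Real.exp_pos x
    rw [one_mul, Real.log_exp]
    field_simp
  rw [h1]
  exact main_eq ht
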